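/- If φ(p,q) is a twice differentiable solution of the equation (1 + p²)φ_pp + 2pq·φ_pq + (1 + q²)φ_qq = 0 on ℝ², then the function ψ(p,q) = p·φ_q(p,q) − q·φ_p(p,q) is also a solution of the same equation. -/

import Mathlib

noncomputable def pd₁ (f : ℝ → ℝ → ℝ) : ℝ → ℝ → ℝ := fun p q => deriv (fun x => f x q) p
noncomputable def pd₂ (f : ℝ → ℝ → ℝ) : ℝ → ℝ → ℝ := fun p q => deriv (fun y => f p y) q

noncomputable def Dv (v : ℝ × ℝ) (G : ℝ × ℝ → ℝ) : ℝ × ℝ → ℝ := fun z => fderiv ℝ G z v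

lemma hasDerivAt_D1 {G : ℝ × ℝ → ℝ} {p q : ℝ} (hG : DifferentiableAt ℝ G (p, q)) :
    HasDerivAt (fun x => G (x, q)) (Dv (1, 0) G (p, q)) p := by
  have h : HasDerivAt (fun x : ℝ => (x, q)) ((1 : ℝ), (0 : ℝ)) p :=
    HasDerivAt.prodMk (hasDerivAt_id p) (hasDerivAt_const p q)
  exact hG.hasFDerivAt.comp_hasDerivAt p h

lemma hasDerivAt_D2 {G : ℝ × ℝ → ℝ} {p q : ℝ} (hG : DifferentiableAt ℝ G (p, q)) :
    HasDerivAt (fun y => G (p, y)) (Dv (0, 1) G (p, q)) q := by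
  have h : HasDerivAt (fun y : ℝ => (p, y)) ((0 : ℝ), (1 : ℝ)) q :=
    HasDerivAt.prodMk (hasDerivAt_const q p) (hasDerivAt_id q)
  exact hG.hasFDerivAt.comp_hasDerivAt q h

lemma Dv_contDiff {G : ℝ × ℝ → ℝ} {n : ℕ} (hG : ContDiff ℝ (n + 1) G) (v : ℝ × ℝ) :
    ContDiff ℝ n (Dv v G) := by
  have h1 : ContDiff ℝ n (fderiv ℝ G) := hG.fderiv_right (by norm_cast)
  exact (ContinuousLinearMap.apply ℝ ℝ v).contDiff.comp h1

lemma Dv_swap {G : ℝ × ℝ → ℝ} (hG : ContDiff ℝ 2 G) (v w z : ℝ × ℝ) :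
    Dv v (Dv w G) z = Dv w (Dv v G) z := by
  have hdf : ∀ y, HasFDerivAt G (fderiv ℝ G y) y := fun y =>
    (hG.differentiable two_ne_zero).differentiableAt.hasFDerivAt
  have hfd : DifferentiableAt ℝ (fderiv ℝ G) z :=
    ((hG.fderiv_right (m := 1) (by norm_cast)).differentiable one_ne_zero).differentiableAt
  have hsymm := second_derivative_symmetric hdf hfd.hasFDerivAt
  have key : ∀ u u' : ℝ × ℝ, Dv u (Dv u' G) z = (fderiv ℝ (fderiv ℝ G) z u) u' := by
    intro u u'
    have h1 : fderiv ℝ (Dv u' G) z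
        = (ContinuousLinearMap.apply ℝ ℝ u').comp (fderiv ℝ (fderiv ℝ G) z) :=
      (((ContinuousLinearMap.apply ℝ ℝ u').hasFDerivAt).comp z hfd.hasFDerivAt).fderiv
    show fderiv ℝ (Dv u' G) z u = _
    rw [h1]
    simp
  rw [key v w, key w v, hsymm v w]

example (φ : ℝ → ℝ → ℝ) (hφ : ContDiff ℝ 3 (fun z : ℝ × ℝ => φ z.1 z.2)) : True := by
  set F : ℝ × ℝ → ℝ := fun z => φ z.1 z.2 with hFdef
  have hF2 : ContDiff ℝ 2 F := hφ.of_le (by norm_num)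
  have hA2 : ContDiff ℝ 2 (Dv (1,0) F) := Dv_contDiff (n := 2) hφ ((1,0) : ℝ × ℝ)
  trivial

theorem recursion_preserves_solutions
    (φ : ℝ → ℝ → ℝ) (hφ : ContDiff ℝ 3 (fun z : ℝ × ℝ => φ z.1 z.2))
    (hsol : ∀ p q : ℝ,
      (1 + p ^ 2) * pd₁ (pd₁ φ) p q + 2 * p * q * pd₁ (pd₂ φ) p q
        + (1 + q ^ 2) * pd₂ (pd₂ φ) p q = 0) :
    ∀ p q : ℝ,
      (1 + p ^ 2) * pd₁ (pd₁ (fun p q => p * pd₂ φ p q - q * pd₁ φ p q)) p q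
        + 2 * p * q * pd₁ (pd₂ (fun p q => p * pd₂ φ p q - q * pd₁ φ p q)) p q
        + (1 + q ^ 2) * pd₂ (pd₂ (fun p q => p * pd₂ φ p q - q * pd₁ φ p q)) p q = 0 := by
  intro p q
  set F : ℝ × ℝ → ℝ := fun z => φ z.1 z.2 with hFdef
  set e1 : ℝ × ℝ := (1, 0) with he1
  set e2 : ℝ × ℝ := (0, 1) with he2
  set A : ℝ × ℝ → ℝ := Dv e1 F with hAdef
  set B : ℝ × ℝ → ℝ := Dv e2 F with hBdef
  set AA : ℝ × ℝ → ℝ := Dv e1 A with hAAdef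
  set AB : ℝ × ℝ → ℝ := Dv e1 B with hABdef
  set BA : ℝ × ℝ → ℝ := Dv e2 A with hBAdef
  set BB : ℝ × ℝ → ℝ := Dv e2 B with hBBdef
  -- regularity
  have hF2 : ContDiff ℝ 2 F := hφ.of_le (by norm_num)
  have hA2 : ContDiff ℝ 2 A := Dv_contDiff (n := 2) hφ e1
  have hB2 : ContDiff ℝ 2 B := Dv_contDiff (n := 2) hφ e2
  have hAA1 : ContDiff ℝ 1 AA := Dv_contDiff (n := 1) hA2 e1
  have hAB1 : ContDiff ℝ 1 AB := Dv_contDiff (n := 1) hB2 e1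
  have hBA1 : ContDiff ℝ 1 BA := Dv_contDiff (n := 1) hA2 e2
  have hBB1 : ContDiff ℝ 1 BB := Dv_contDiff (n := 1) hB2 e2
  have dF : Differentiable ℝ F := hF2.differentiable two_ne_zero
  have dA : Differentiable ℝ A := hA2.differentiable two_ne_zero
  have dB : Differentiable ℝ B := hB2.differentiable two_ne_zero
  have dAA : Differentiable ℝ AA := hAA1.differentiable one_ne_zero
  have dAB : Differentiable ℝ AB := hAB1.differentiable one_ne_zero
  have dBA : Differentiable ℝ BA := hBA1.differentiable one_ne_zero
  have dBB : Differentiable ℝ BB := hBB1.differentiable one_ne_zero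
  -- symmetry: BA = AB as functions
  have hBAAB : BA = AB := funext fun z => Dv_swap hF2 e2 e1 z
  -- first partials of φ
  have hpd1 : ∀ p q : ℝ, pd₁ φ p q = A (p, q) := fun p q =>
    (hasDerivAt_D1 (dF (p, q))).deriv
  have hpd2 : ∀ p q : ℝ, pd₂ φ p q = B (p, q) := fun p q =>
    (hasDerivAt_D2 (dF (p, q))).deriv
  -- second partials of φ
  have h11 : ∀ p q : ℝ, pd₁ (pd₁ φ) p q = AA (p, q) := by
    intro p q
    show deriv (fun x => pd₁ φ x q) p = _
    rw [funext fun x => hpd1 x q]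
    exact (hasDerivAt_D1 (dA (p, q))).deriv
  have h12 : ∀ p q : ℝ, pd₁ (pd₂ φ) p q = AB (p, q) := by
    intro p q
    show deriv (fun x => pd₂ φ x q) p = _
    rw [funext fun x => hpd2 x q]
    exact (hasDerivAt_D1 (dB (p, q))).deriv
  have h22 : ∀ p q : ℝ, pd₂ (pd₂ φ) p q = BB (p, q) := by
    intro p q
    show deriv (fun y => pd₂ φ p y) q = _
    rw [funext fun y => hpd2 p y]
    exact (hasDerivAt_D2 (dB (p, q))).deriv
  have hS : ∀ p q : ℝ,
      (1 + p ^ 2) * AA (p, q) + 2 * p * q * AB (p, q) + (1 + q ^ 2) * BB (p, q) = 0 := by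
    intro p q
    rw [← h11, ← h12, ← h22]; exact hsol p q
  -- differentiate the equation in p
  have hEp : 2 * p * AA (p, q) + (1 + p ^ 2) * Dv e1 AA (p, q)
      + 2 * q * AB (p, q) + 2 * p * q * Dv e1 AB (p, q)
      + (1 + q ^ 2) * Dv e1 BB (p, q) = 0 := by
    have hone : HasDerivAt (fun x : ℝ => 1 + x ^ 2) (2 * p) p := by
      simpa using (hasDerivAt_pow 2 p).const_add 1
    have htwo : HasDerivAt (fun x : ℝ => 2 * x * q) (2 * q) p := by
      simpa [mul_comm, mul_assoc] using ((hasDerivAt_id p).const_mul 2).mul_const q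
    have hE : HasDerivAt
        (fun x => (1 + x ^ 2) * AA (x, q) + 2 * x * q * AB (x, q) + (1 + q ^ 2) * BB (x, q))
        (2 * p * AA (p, q) + (1 + p ^ 2) * Dv e1 AA (p, q)
          + 2 * q * AB (p, q) + 2 * p * q * Dv e1 AB (p, q)
          + (1 + q ^ 2) * Dv e1 BB (p, q)) p := by
      have := ((hone.mul (hasDerivAt_D1 (dAA (p, q)))).add
          (htwo.mul (hasDerivAt_D1 (dAB (p, q))))).add
          ((hasDerivAt_D1 (dBB (p, q))).const_mul (1 + q ^ 2))
      exact this.congr_deriv (by ring)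
    have h0 : deriv
        (fun x => (1 + x ^ 2) * AA (x, q) + 2 * x * q * AB (x, q) + (1 + q ^ 2) * BB (x, q))
        p = 0 := by
      rw [funext fun x => hS x q]
      simp
    rw [← hE.deriv]; exact h0
  -- differentiate the equation in q
  have hEq' : (1 + p ^ 2) * Dv e2 AA (p, q) + 2 * p * AB (p, q)
      + 2 * p * q * Dv e2 AB (p, q) + 2 * q * BB (p, q)
      + (1 + q ^ 2) * Dv e2 BB (p, q) = 0 := by
    have hone : HasDerivAt (fun y : ℝ => 1 + y ^ 2) (2 * q) q := by
      simpa using (hasDerivAt_pow 2 q).const_add 1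
    have htwo : HasDerivAt (fun y : ℝ => 2 * p * y) (2 * p) q := by
      simpa using (hasDerivAt_id q).const_mul (2 * p)
    have hE : HasDerivAt
        (fun y => (1 + p ^ 2) * AA (p, y) + 2 * p * y * AB (p, y) + (1 + y ^ 2) * BB (p, y))
        ((1 + p ^ 2) * Dv e2 AA (p, q) + 2 * p * AB (p, q)
          + 2 * p * q * Dv e2 AB (p, q) + 2 * q * BB (p, q)
          + (1 + q ^ 2) * Dv e2 BB (p, q)) q := by
      have := (((hasDerivAt_D2 (dAA (p, q))).const_mul (1 + p ^ 2)).add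
          (htwo.mul (hasDerivAt_D2 (dAB (p, q))))).add
          (hone.mul (hasDerivAt_D2 (dBB (p, q))))
      exact this.congr_deriv (by ring)
    have h0 : deriv
        (fun y => (1 + p ^ 2) * AA (p, y) + 2 * p * y * AB (p, y) + (1 + y ^ 2) * BB (p, y))
        q = 0 := by
      rw [funext fun y => hS p y]
      simp
    rw [← hE.deriv]; exact h0
  -- partials of ψ
  have hψ1 : ∀ p q : ℝ, pd₁ (fun p q => p * pd₂ φ p q - q * pd₁ φ p q) p q
      = 1 * B (p, q) + p * AB (p, q) - q * AA (p, q) := by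
    intro p q
    show deriv (fun x => x * pd₂ φ x q - q * pd₁ φ x q) p = _
    rw [funext fun x => show x * pd₂ φ x q - q * pd₁ φ x q = x * B (x, q) - q * A (x, q) by
      rw [hpd1, hpd2]]
    exact (((hasDerivAt_id p).mul (hasDerivAt_D1 (dB (p, q)))).sub
      ((hasDerivAt_D1 (dA (p, q))).const_mul q)).deriv
  have hψ2 : ∀ p q : ℝ, pd₂ (fun p q => p * pd₂ φ p q - q * pd₁ φ p q) p q
      = p * BB (p, q) - (1 * A (p, q) + q * BA (p, q)) := by
    intro p q
    show deriv (fun y => p * pd₂ φ p y - y * pd₁ φ p y) q = _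
    rw [funext fun y => show p * pd₂ φ p y - y * pd₁ φ p y = p * B (p, y) - y * A (p, y) by
      rw [hpd1, hpd2]]
    exact (((hasDerivAt_D2 (dB (p, q))).const_mul p).sub
      ((hasDerivAt_id q).mul (hasDerivAt_D2 (dA (p, q))))).deriv
  have hψ11 : pd₁ (pd₁ (fun p q => p * pd₂ φ p q - q * pd₁ φ p q)) p q
      = 1 * AB (p, q) + (1 * AB (p, q) + p * Dv e1 AB (p, q)) - q * Dv e1 AA (p, q) := by
    show deriv (fun x => pd₁ (fun p q => p * pd₂ φ p q - q * pd₁ φ p q) x q) p = _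
    rw [funext fun x => hψ1 x q]
    exact ((((hasDerivAt_D1 (dB (p, q))).const_mul 1).add
      ((hasDerivAt_id p).mul (hasDerivAt_D1 (dAB (p, q))))).sub
      ((hasDerivAt_D1 (dAA (p, q))).const_mul q)).deriv
  have hψ12 : pd₁ (pd₂ (fun p q => p * pd₂ φ p q - q * pd₁ φ p q)) p q
      = 1 * BB (p, q) + p * Dv e1 BB (p, q)
        - (1 * Dv e1 A (p, q) + q * Dv e1 BA (p, q)) := by
    show deriv (fun x => pd₂ (fun p q => p * pd₂ φ p q - q * pd₁ φ p q) x q) p = _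
    rw [funext fun x => hψ2 x q]
    exact (((hasDerivAt_id p).mul (hasDerivAt_D1 (dBB (p, q)))).sub
      (((hasDerivAt_D1 (dA (p, q))).const_mul 1).add
        ((hasDerivAt_D1 (dBA (p, q))).const_mul q))).deriv
  have hψ22 : pd₂ (pd₂ (fun p q => p * pd₂ φ p q - q * pd₁ φ p q)) p q
      = p * Dv e2 BB (p, q)
        - (1 * Dv e2 A (p, q) + (1 * BA (p, q) + q * Dv e2 BA (p, q))) := by
    show deriv (fun y => pd₂ (fun p q => p * pd₂ φ p q - q * pd₁ φ p q) p y) q = _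
    rw [funext fun y => hψ2 p y]
    exact (((hasDerivAt_D2 (dBB (p, q))).const_mul p).sub
      (((hasDerivAt_D2 (dA (p, q))).const_mul 1).add
        ((hasDerivAt_id q).mul (hasDerivAt_D2 (dBA (p, q)))))).deriv
  rw [hψ11, hψ12, hψ22]
  -- symmetry identities for third derivatives
  have s1 : Dv e2 AA (p, q) = Dv e1 AB (p, q) := by
    rw [hAAdef, hABdef, Dv_swap hA2 e2 e1 (p, q), hBAdef.symm, hBAAB]
  have s2 : Dv e2 AB (p, q) = Dv e1 BB (p, q) := by
    rw [hABdef, hBBdef, Dv_swap hB2 e2 e1 (p, q)]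
  have s3 : Dv e1 BA (p, q) = Dv e1 AB (p, q) := by rw [hBAAB]
  have s4 : Dv e2 BA (p, q) = Dv e1 BB (p, q) := by
    rw [hBAAB, hABdef, hBBdef, Dv_swap hB2 e2 e1 (p, q)]
  have s5 : Dv e1 A (p, q) = AA (p, q) := rfl
  have s6 : Dv e2 A (p, q) = AB (p, q) := by rw [← hBAdef, hBAAB]
  have s7 : BA (p, q) = AB (p, q) := by rw [hBAAB]
  rw [s3, s4, s5, s6, s7]
  rw [s1, s2] at hEq'
  linear_combination p * hEq' - q * hEp
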